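/- Let (X,d) be a complete metric space, φ : X → ℝ lower semicontinuous and bounded below, and T : X → X with η(d(x,Tx)) ≤ φ(x) − φ(Tx) for all x, where η is nonnegative with η(0)=0 and η satisfies: there exist c, ε > 0 with η(t) ≥ c·t whenever η(t) ≤ ε. Then the Picard iterates x_{n+1} = T x_n (from any x_0) form a Cauchy sequence. -/
import Mathlib


theorem picard_iterates_cauchy {X : Type*} [MetricSpace X] [CompleteSpace X]
    (η : ℝ → ℝ) (hnn : ∀ t, 0 ≤ t → 0 ≤ η t) (hη0 : η 0 = 0)
    (φ : X → ℝ) (hlsc : LowerSemicontinuous φ) (hbd : BddBelow (Set.range φ))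
    (c ε : ℝ) (hc : 0 < c) (hε : 0 < ε)
    (hgrow : ∀ t, 0 ≤ t → η t ≤ ε → c * t ≤ η t)
    (T : X → X) (hT : ∀ x, η (dist x (T x)) ≤ φ x - φ (T x))
    (x : ℕ → X) (hx : ∀ n, x (n + 1) = T (x n)) :
    CauchySeq x := by
  set a : ℕ → ℝ := fun n => dist (x n) (x (n + 1)) with ha
  have hstep : ∀ n, η (a n) ≤ φ (x n) - φ (x (n + 1)) := by
    intro n
    have := hT (x n)
    rwa [← hx n] at this
  have hanneg : ∀ n, 0 ≤ a n := fun n => dist_nonneg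
  have hηnn : ∀ n, 0 ≤ η (a n) := fun n => hnn _ (hanneg n)
  obtain ⟨B, hB⟩ := hbd
  have hBle : ∀ y, B ≤ φ y := fun y => hB (Set.mem_range_self y)
  -- partial sums bounded
  have hsum_le : ∀ N, ∑ n ∈ Finset.range N, η (a n) ≤ φ (x 0) - B := by
    intro N
    calc ∑ n ∈ Finset.range N, η (a n)
        ≤ ∑ n ∈ Finset.range N, (φ (x n) - φ (x (n + 1))) :=
          Finset.sum_le_sum fun n _ => hstep n
      _ = φ (x 0) - φ (x N) := by
          rw [← Finset.sum_range_sub' (fun n => φ (x n)) N]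
      _ ≤ φ (x 0) - B := by linarith [hBle (x N)]
  have hηsummable : Summable fun n => η (a n) :=
    summable_of_sum_range_le hηnn hsum_le
  have htend : Filter.Tendsto (fun n => η (a n)) Filter.atTop (nhds 0) :=
    hηsummable.tendsto_atTop_zero
  have hev : ∀ᶠ n in Filter.atTop, η (a n) ≤ ε := by
    filter_upwards [htend.eventually (ge_mem_nhds hε)] with n hn using hn
  obtain ⟨N, hN⟩ := Filter.eventually_atTop.mp hev
  have hbound : ∀ n, a (n + N) ≤ η (a (n + N)) / c := by
    intro n
    have h := hgrow (a (n + N)) (hanneg _) (hN _ (Nat.le_add_left N n))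
    rw [le_div_iff₀ hc]
    linarith [h]
  have hsummable_shift : Summable fun n => a (n + N) := by
    refine Summable.of_nonneg_of_le (fun n => hanneg _) hbound ?_
    exact ((summable_nat_add_iff N).mpr hηsummable).div_const c
  have hsummable : Summable a := (summable_nat_add_iff N).mp hsummable_shift
  exact cauchySeq_of_dist_le_of_summable a (fun n => le_refl _) hsummable
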